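/- The union of all bipartite pairs of a graph is itself a bipartite pair (i.e., there is a maximal bipartite pair). -/
import Mathlib


open Cardinal

/-- `(F₀, F₁)` is a bipartite pair: `F₀ ⊆ M` (vertices of degree `κ`), `F₁ ⊆ N = V \ M`,
they are disjoint, every `v ∈ F₀` has full degree `κ` many neighbors in `F₁`, and every
`u ∈ F₁` has full degree many neighbors in `F₀`. -/
def IsBipartitePair {V : Type u} (G : SimpleGraph V) (κ : Cardinal.{u})
    (F0 F1 : Set V) : Prop :=
  Disjoint F0 F1 ∧
    (∀ v ∈ F0, #↥(G.neighborSet v) = κ ∧ #↥(G.neighborSet v ∩ F1) = #↥(G.neighborSet v)) ∧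
    (∀ u ∈ F1, #↥(G.neighborSet u) ≠ κ ∧ #↥(G.neighborSet u ∩ F0) = #↥(G.neighborSet u))

/-- The componentwise union of all bipartite pairs is itself a bipartite pair:
there is a maximal bipartite pair. -/
theorem stmt9 {V : Type u} (G : SimpleGraph V) (κ : Cardinal.{u}) :
    IsBipartitePair G κ
      (⋃₀ {F0 | ∃ F1, IsBipartitePair G κ F0 F1})
      (⋃₀ {F1 | ∃ F0, IsBipartitePair G κ F0 F1}) := by
  refine ⟨?_, ?_, ?_⟩
  · rw [Set.disjoint_left]
    rintro v ⟨F0, ⟨F1, h⟩, hv⟩ ⟨F1', ⟨F0', h'⟩, hv'⟩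
    exact (h'.2.2 v hv').1 (h.2.1 v hv).1
  · rintro v ⟨F0, ⟨F1, h⟩, hv⟩
    obtain ⟨hκ, hcard⟩ := h.2.1 v hv
    refine ⟨hκ, le_antisymm (Cardinal.mk_le_mk_of_subset Set.inter_subset_left) ?_⟩
    calc #↥(G.neighborSet v) = #↥(G.neighborSet v ∩ F1) := hcard.symm
      _ ≤ _ := Cardinal.mk_le_mk_of_subset
          (Set.inter_subset_inter_right _ (Set.subset_sUnion_of_mem (show F1 ∈ {F1 | ∃ F0, IsBipartitePair G κ F0 F1} from ⟨F0, h⟩)))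
  · rintro u ⟨F1, ⟨F0, h⟩, hu⟩
    obtain ⟨hκ, hcard⟩ := h.2.2 u hu
    refine ⟨hκ, le_antisymm (Cardinal.mk_le_mk_of_subset Set.inter_subset_left) ?_⟩
    calc #↥(G.neighborSet u) = #↥(G.neighborSet u ∩ F0) := hcard.symm
      _ ≤ _ := Cardinal.mk_le_mk_of_subset
          (Set.inter_subset_inter_right _ (Set.subset_sUnion_of_mem (show F0 ∈ {F0 | ∃ F1, IsBipartitePair G κ F0 F1} from ⟨F1, h⟩)))
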